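/- Let u ⊆ {1,…,d}. Then ∫_{[0,1]^d} ∫_{[0,1]^d} f(x) f(x_u : y_{-u}) dx dy = μ² + τ̲²_u. -/

import Mathlib

open MeasureTheory Finset

/-- The uniform (Lebesgue) probability measure on the interval `[0,1]`. -/
noncomputable def unifSeg : Measure ℝ := (volume : Measure ℝ).restrict (Set.Icc 0 1)

/-- The uniform (Lebesgue) product probability measure on the cube `[0,1]^d`. -/
noncomputable def unifCube (d : ℕ) : Measure (Fin d → ℝ) :=
  Measure.pi fun _ => unifSeg

/-- `glue u x y` is the point whose `j`-th coordinate is `x j` for `j ∈ u`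
and `y j` otherwise, i.e. `(x_u : y_{-u})`. -/
def glue {d : ℕ} (u : Finset (Fin d)) (x y : Fin d → ℝ) : Fin d → ℝ :=
  fun j => if j ∈ u then x j else y j

/-- The lower Sobol' index `τ̲²_u` of the set `u`. -/
noncomputable def lowerSobol {d : ℕ} (f : (Fin d → ℝ) → ℝ) (u : Finset (Fin d)) : ℝ :=
  (∫ x, (∫ y, f (glue u x y) ∂(unifCube d)) ^ 2 ∂(unifCube d))
    - (∫ x, f x ∂(unifCube d)) ^ 2

/-- The variance `σ²` of `f` over the unit cube. -/
noncomputable def sigmaSq {d : ℕ} (f : (Fin d → ℝ) → ℝ) : ℝ :=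
  (∫ x, f x ^ 2 ∂(unifCube d)) - (∫ x, f x ∂(unifCube d)) ^ 2

/-- The upper Sobol' index `τ̄²_u = σ² - τ̲²_{uᶜ}` of the set `u`. -/
noncomputable def upperSobol {d : ℕ} (f : (Fin d → ℝ) → ℝ) (u : Finset (Fin d)) : ℝ :=
  sigmaSq f - lowerSobol f uᶜ

instance : IsProbabilityMeasure unifSeg :=
  ⟨by simp [unifSeg, Real.volume_Icc]⟩

instance (d : ℕ) : IsProbabilityMeasure (unifCube d) := by
  unfold unifCube; infer_instance

lemma mp_fst {α β : Type*} [MeasurableSpace α] [MeasurableSpace β]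
    (μ : Measure α) (ν : Measure β) [SFinite μ] [IsProbabilityMeasure ν] :
    MeasurePreserving (Prod.fst) (μ.prod ν) μ :=
  ⟨measurable_fst, by simp⟩

lemma mp_snd {α β : Type*} [MeasurableSpace α] [MeasurableSpace β]
    (μ : Measure α) (ν : Measure β) [IsProbabilityMeasure μ] [SFinite ν] :
    MeasurePreserving (Prod.snd) (μ.prod ν) ν :=
  ⟨measurable_snd, by simp⟩

lemma glue_glue {d : ℕ} (u : Finset (Fin d)) (w x y : Fin d → ℝ) :
    glue u (glue u w x) y = glue u w y := by
  funext j; simp only [glue]; split <;> simp_all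

lemma mp_glue {d : ℕ} (u : Finset (Fin d)) :
    MeasurePreserving (fun z : (Fin d → ℝ) × (Fin d → ℝ) => glue u z.1 z.2)
      ((unifCube d).prod (unifCube d)) (unifCube d) := by
  classical
  set e := MeasurableEquiv.piEquivPiSubtypeProd (fun _ : Fin d => ℝ) (· ∈ u) with he
  have h1 := measurePreserving_piEquivPiSubtypeProd (fun _ : Fin d => unifSeg) (· ∈ u)
  have h2 := h1.prod h1
  have h4 := h1.symm e
  have key := (h4.comp ((mp_fst _ _).prod (mp_snd _ _))).comp h2
  have hfun : (fun z : (Fin d → ℝ) × (Fin d → ℝ) => glue u z.1 z.2)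
      = (e.symm ∘ Prod.map Prod.fst Prod.snd ∘ Prod.map e e) := by
    funext z
    show glue u z.1 z.2 = e.symm ((e z.1).1, (e z.2).2)
    funext j
    simp only [he, glue, MeasurableEquiv.piEquivPiSubtypeProd,
      MeasurableEquiv.coe_mk, MeasurableEquiv.symm_mk,
      Equiv.piEquivPiSubtypeProd, Equiv.coe_fn_mk, Equiv.coe_fn_symm_mk]
    split <;> rfl
  rw [hfun]
  exact key

lemma integrable_mul_of_memL2 {α : Type*} [MeasurableSpace α] {μ : Measure α} {g h : α → ℝ}
    (hg : MemLp g 2 μ) (hh : MemLp h 2 μ) : Integrable (fun x => g x * h x) μ := by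
  have key : MemLp (g • h) 1 μ :=
    hh.smul hg (hpqr := ⟨by rw [inv_one, ENNReal.inv_two_add_inv_two]⟩)
  exact memLp_one_iff_integrable.mp key

lemma mp_integral_comp {α β : Type*} [MeasurableSpace α] [MeasurableSpace β]
    {μ : Measure α} {ν : Measure β} {T : α → β} (hT : MeasurePreserving T μ ν)
    {g : β → ℝ} (hg : AEStronglyMeasurable g ν) :
    ∫ x, g (T x) ∂μ = ∫ y, g y ∂ν := by
  rw [← hT.map_eq] at hg ⊢
  exact (integral_map hT.measurable.aemeasurable hg).symm

theorem stmt8 {d : ℕ} (hd : 1 ≤ d) (f : (Fin d → ℝ) → ℝ)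
    (hf : MemLp f 2 (unifCube d)) (u : Finset (Fin d)) :
    (∫ x, ∫ y, f x * f (glue u x y) ∂(unifCube d) ∂(unifCube d))
      = (∫ x, f x ∂(unifCube d)) ^ 2 + lowerSobol f u := by
  set ν := unifCube d with hν
  set g : (Fin d → ℝ) → ℝ := fun x => ∫ y, f (glue u x y) ∂ν with hg
  -- measure preserving maps
  have mpG := mp_glue u
  have mpfst2 : MeasurePreserving (Prod.fst) (ν.prod ν) ν := mp_fst ν ν
  have mpfst3 : MeasurePreserving (Prod.fst) ((ν.prod ν).prod ν) (ν.prod ν) :=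
    mp_fst (ν.prod ν) ν
  have mpT : MeasurePreserving (Prod.map (fun z : (Fin d → ℝ) × (Fin d → ℝ) => glue u z.1 z.2)
      (id : (Fin d → ℝ) → (Fin d → ℝ))) ((ν.prod ν).prod ν) (ν.prod ν) :=
    mpG.prod (MeasurePreserving.id ν)
  have mpπ : MeasurePreserving (Prod.map (Prod.fst : (Fin d → ℝ) × (Fin d → ℝ) → _)
      (id : (Fin d → ℝ) → (Fin d → ℝ))) ((ν.prod ν).prod ν) (ν.prod ν) :=
    mpfst2.prod (MeasurePreserving.id ν)
  -- Memℒp facts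
  have A : MemLp (fun z : (Fin d → ℝ) × (Fin d → ℝ) => f z.1) 2 (ν.prod ν) :=
    hf.comp_measurePreserving mpfst2
  have B : MemLp (fun z : (Fin d → ℝ) × (Fin d → ℝ) => f (glue u z.1 z.2)) 2 (ν.prod ν) :=
    hf.comp_measurePreserving mpG
  have F1 : MemLp (fun q : ((Fin d → ℝ) × (Fin d → ℝ)) × (Fin d → ℝ) =>
      f (glue u q.1.1 q.1.2)) 2 ((ν.prod ν).prod ν) :=
    B.comp_measurePreserving mpfst3
  have F2 : MemLp (fun q : ((Fin d → ℝ) × (Fin d → ℝ)) × (Fin d → ℝ) =>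
      f (glue u q.1.1 q.2)) 2 ((ν.prod ν).prod ν) :=
    B.comp_measurePreserving mpπ
  have intAB : Integrable (fun z : (Fin d → ℝ) × (Fin d → ℝ) =>
      f z.1 * f (glue u z.1 z.2)) (ν.prod ν) := integrable_mul_of_memL2 A B
  have intF : Integrable (fun q : ((Fin d → ℝ) × (Fin d → ℝ)) × (Fin d → ℝ) =>
      f (glue u q.1.1 q.1.2) * f (glue u q.1.1 q.2)) ((ν.prod ν).prod ν) :=
    integrable_mul_of_memL2 F1 F2
  -- step 1: combine the two integrals into one over the product
  have step1 : (∫ x, ∫ y, f x * f (glue u x y) ∂ν ∂ν)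
      = ∫ z, f z.1 * f (glue u z.1 z.2) ∂(ν.prod ν) :=
    (integral_prod _ intAB).symm
  -- step 2: change of variables x = glue u w x'
  have step2 : (∫ z, f z.1 * f (glue u z.1 z.2) ∂(ν.prod ν))
      = ∫ q, f (glue u q.1.1 q.1.2) * f (glue u q.1.1 q.2) ∂((ν.prod ν).prod ν) := by
    rw [← mp_integral_comp mpT intAB.aestronglyMeasurable]
    refine integral_congr_ae (Filter.Eventually.of_forall fun q => ?_)
    simp [Prod.map, glue_glue]
  -- step 3: Fubini over the outer product
  have step3 : (∫ q, f (glue u q.1.1 q.1.2) * f (glue u q.1.1 q.2) ∂((ν.prod ν).prod ν))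
      = ∫ z, f (glue u z.1 z.2) * g z.1 ∂(ν.prod ν) := by
    rw [integral_prod _ intF]
    refine integral_congr_ae (Filter.Eventually.of_forall fun z => ?_)
    simp only [hg]
    exact integral_const_mul _ _
  have intK : Integrable (fun z : (Fin d → ℝ) × (Fin d → ℝ) =>
      f (glue u z.1 z.2) * g z.1) (ν.prod ν) := by
    have h := intF.integral_prod_left
    refine h.congr (Filter.Eventually.of_forall fun z => ?_)
    simp only [hg]
    exact integral_const_mul _ _
  have step4 : (∫ z, f (glue u z.1 z.2) * g z.1 ∂(ν.prod ν)) = ∫ w, g w ^ 2 ∂ν := by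
    rw [integral_prod _ intK]
    refine integral_congr_ae (Filter.Eventually.of_forall fun w => ?_)
    show (∫ x, f (glue u w x) * g w ∂ν) = g w ^ 2
    rw [integral_mul_const]
    simp [hg, sq]
  rw [step1, step2, step3, step4]
  simp only [lowerSobol, ← hν, ← hg]
  ring
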